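/- Let k ≥ 3 and n ≥ 3, and let E be a k-ary relation on ℝ. Fix an integer T ≥ 2 and a strictly increasing sequence a₁ < ⋯ < a_N of natural numbers, and suppose the sequence (a₁,…,a_N) contains no E-indiscernible subsequence of length n. Then the increasing enumeration (b₁ < b₂ < ⋯ < b_{2^N}) of B_T contains no E↑-indiscernible subsequence of length 2n + k − 4. -/

import Mathlib

/-- A finite sequence `a` is `E`-indiscernible for a `k`-ary relation `E` if `E` holds on all
increasing `k`-tuples from the sequence, or fails on all of them. -/
def IsIndiscernible {X : Type*} {k m : ℕ} (E : (Fin k → X) → Prop) (a : Fin m → X) : Prop :=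
  (∀ s : Fin k → Fin m, StrictMono s → E (a ∘ s)) ∨
  (∀ s : Fin k → Fin m, StrictMono s → ¬ E (a ∘ s))

/-- The element of `B_T` with digit function `β`: the sum `Σ_i β(i)·T^(a i)`. -/
def digitSum {N : ℕ} (T : ℕ) (a : Fin N → ℕ) (β : Fin N → Bool) : ℕ :=
  ∑ i, if β i then T ^ a i else 0

/-- `δ(b,c) = a_{Δ(b,c)}` where `Δ(b,c)` is the largest index at which the digit functions
`β`, `γ` of `b`, `c` differ (as `a` is strictly monotone, this equals the sup of `a` over all
differing indices). -/
def deltaVal {N : ℕ} (a : Fin N → ℕ) (β γ : Fin N → Bool) : ℕ :=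
  (Finset.univ.filter fun i => β i ≠ γ i).sup a

/-- The `(k+1)`-ary step-up relation `E↑` of a `k`-ary relation `E` on ℝ (here `k = k₀ + 3`),
defined on increasing tuples from `B_T` via the top differing digits `δᵢ = δ(cᵢ₊₁, cᵢ)`,
and false on all other tuples. -/
def StepUp {k N : ℕ} (E : (Fin (k + 3) → ℝ) → Prop) (T : ℕ) (a : Fin N → ℕ)
    (c : Fin (k + 4) → ℕ) : Prop :=
  StrictMono c ∧ ∃ β : Fin (k + 4) → Fin N → Bool,
    (∀ i, c i = digitSum T a (β i)) ∧
    (let d : Fin (k + 3) → ℝ := fun i => (deltaVal a (β i.castSucc) (β i.succ) : ℝ)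
     (E d ∧ StrictMono d) ∨
     (E (fun i => d (Fin.rev i)) ∧ StrictAnti d) ∨
     (d 0 < d 1 ∧ d 2 < d 1))

/-! ### Auxiliary lemmas about digit functions -/

def diffSet {N : ℕ} (β γ : Fin N → Bool) : Finset (Fin N) :=
  Finset.univ.filter fun i => β i ≠ γ i

lemma diffSet_nonempty {N : ℕ} {β γ : Fin N → Bool} (h : β ≠ γ) : (diffSet β γ).Nonempty := by
  rcases Function.ne_iff.1 h with ⟨i, hi⟩
  exact ⟨i, by simp [diffSet, hi]⟩

lemma deltaVal_eq_max' {N : ℕ} {a : Fin N → ℕ} (ha : StrictMono a) {β γ : Fin N → Bool}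
    (h : (diffSet β γ).Nonempty) : deltaVal a β γ = a ((diffSet β γ).max' h) := by
  refine le_antisymm (Finset.sup_le fun i hi => ha.monotone (Finset.le_max' _ _ hi)) ?_
  exact Finset.le_sup (Finset.max'_mem _ h)

lemma geo_lt {T : ℕ} (hT : 2 ≤ T) : ∀ M : ℕ, ∑ j ∈ Finset.range M, T ^ j < T ^ M := by
  intro M
  induction M with
  | zero => simp
  | succ M ih =>
    rw [Finset.sum_range_succ, pow_succ]
    have : T ^ M * 2 ≤ T ^ M * T := Nat.mul_le_mul_left _ hT
    omega

lemma sum_lt_of_top {N T : ℕ} {a : Fin N → ℕ} (hT : 2 ≤ T) (ha : StrictMono a)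
    {β γ : Fin N → Bool} (i₀ : Fin N) (hagree : ∀ j, i₀ < j → β j = γ j)
    (h1 : β i₀ = false) (h2 : γ i₀ = true) : digitSum T a β < digitSum T a γ := by
  classical
  unfold digitSum
  rw [← Finset.sum_filter_add_sum_filter_not Finset.univ (fun j => j ≤ i₀)
    (fun i => if β i then T ^ a i else 0),
    ← Finset.sum_filter_add_sum_filter_not Finset.univ (fun j => j ≤ i₀)
    (fun i => if γ i then T ^ a i else 0)]
  have hB : ∑ i ∈ Finset.univ.filter (fun j => ¬ j ≤ i₀), (if β i then T ^ a i else 0)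
      = ∑ i ∈ Finset.univ.filter (fun j => ¬ j ≤ i₀), (if γ i then T ^ a i else 0) := by
    refine Finset.sum_congr rfl fun i hi => ?_
    rw [Finset.mem_filter] at hi
    rw [hagree i (lt_of_not_ge hi.2)]
  rw [hB]
  have hA : ∑ i ∈ Finset.univ.filter (fun j => j ≤ i₀), (if β i then T ^ a i else 0)
      < ∑ i ∈ Finset.univ.filter (fun j => j ≤ i₀), (if γ i then T ^ a i else 0) := by
    have hle : ∑ i ∈ Finset.univ.filter (fun j => j ≤ i₀), (if β i then T ^ a i else 0)
        ≤ ∑ i ∈ Finset.univ.filter (fun j => j < i₀), T ^ a i := by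
      rw [show (Finset.univ.filter (fun j => j ≤ i₀))
          = insert i₀ (Finset.univ.filter (fun j => j < i₀)) by
        ext j; simp [Finset.mem_filter, le_iff_lt_or_eq, or_comm]]
      rw [Finset.sum_insert (by simp)]
      rw [h1]
      simp only [Bool.false_eq_true, if_false, zero_add]
      exact Finset.sum_le_sum fun i _ => by split <;> simp
    have hgeo : ∑ i ∈ Finset.univ.filter (fun j => j < i₀), T ^ a i < T ^ a i₀ := by
      have hinj : Set.InjOn a (Finset.univ.filter (fun j => j < i₀)) :=
        fun x _ y _ h => ha.injective h
      rw [← Finset.sum_image (f := fun v => T ^ v) (g := a) (fun x hx y hy => hinj hx hy)]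
      calc ∑ v ∈ (Finset.univ.filter (fun j => j < i₀)).image a, T ^ v
          ≤ ∑ v ∈ Finset.range (a i₀), T ^ v := by
            refine Finset.sum_le_sum_of_subset ?_
            intro v hv
            rw [Finset.mem_image] at hv
            obtain ⟨j, hj, rfl⟩ := hv
            rw [Finset.mem_filter] at hj
            exact Finset.mem_range.2 (ha hj.2)
        _ < T ^ a i₀ := geo_lt hT _
    have hle2 : T ^ a i₀ ≤ ∑ i ∈ Finset.univ.filter (fun j => j ≤ i₀),
        (if γ i then T ^ a i else 0) := by
      have := Finset.single_le_sum (f := fun i => if γ i then T ^ a i else 0)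
        (fun i _ => Nat.zero_le _) (show i₀ ∈ Finset.univ.filter (fun j => j ≤ i₀) by simp)
      simpa [h2] using this
    omega
  omega

lemma agree_of_max'_lt {N : ℕ} {β γ : Fin N → Bool} (h : (diffSet β γ).Nonempty)
    {j : Fin N} (hj : (diffSet β γ).max' h < j) : β j = γ j := by
  by_contra hne
  exact absurd (Finset.le_max' _ j (by simp [diffSet, hne])) (not_le.2 hj)

lemma top_of_lt {N T : ℕ} {a : Fin N → ℕ} (hT : 2 ≤ T) (ha : StrictMono a)
    {β γ : Fin N → Bool} (h : digitSum T a β < digitSum T a γ) (hne : β ≠ γ) :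
    β ((diffSet β γ).max' (diffSet_nonempty hne)) = false ∧
    γ ((diffSet β γ).max' (diffSet_nonempty hne)) = true := by
  set i₀ := (diffSet β γ).max' (diffSet_nonempty hne) with hi₀
  have hmem : i₀ ∈ diffSet β γ := Finset.max'_mem _ _
  have hdiff : β i₀ ≠ γ i₀ := by simpa [diffSet] using hmem
  have hagree : ∀ j, i₀ < j → β j = γ j := fun j hj => agree_of_max'_lt _ hj
  cases hb : β i₀ <;> cases hg : γ i₀
  · simp [hb, hg] at hdiff
  · exact ⟨rfl, rfl⟩
  · exfalso
    have : digitSum T a γ < digitSum T a β :=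
      sum_lt_of_top hT ha i₀ (fun j hj => (hagree j hj).symm) hg hb
    omega
  · simp [hb, hg] at hdiff

lemma digitSum_injective {N T : ℕ} {a : Fin N → ℕ} (hT : 2 ≤ T) (ha : StrictMono a) :
    Function.Injective (digitSum T a) := by
  intro β γ h
  by_contra hne
  set i₀ := (diffSet β γ).max' (diffSet_nonempty hne) with hi₀
  have hmem : i₀ ∈ diffSet β γ := Finset.max'_mem _ _
  have hdiff : β i₀ ≠ γ i₀ := by simpa [diffSet] using hmem
  have hagree : ∀ j, i₀ < j → β j = γ j := fun j hj => agree_of_max'_lt _ hj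
  cases hb : β i₀ <;> cases hg : γ i₀
  · simp [hb, hg] at hdiff
  · have := sum_lt_of_top hT ha i₀ hagree hb hg; omega
  · have : digitSum T a γ < digitSum T a β :=
      sum_lt_of_top hT ha i₀ (fun j hj => (hagree j hj).symm) hg hb
    omega
  · simp [hb, hg] at hdiff

lemma delta_combine {N T : ℕ} {a : Fin N → ℕ} (hT : 2 ≤ T) (ha : StrictMono a)
    {β γ ρ : Fin N → Bool} (h1 : digitSum T a β < digitSum T a γ)
    (h2 : digitSum T a γ < digitSum T a ρ) :
    deltaVal a β γ ≠ deltaVal a γ ρ ∧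
    deltaVal a β ρ = max (deltaVal a β γ) (deltaVal a γ ρ) := by
  have hne1 : β ≠ γ := fun h => by subst h; omega
  have hne2 : γ ≠ ρ := fun h => by subst h; omega
  obtain ⟨hbi, hgi⟩ := top_of_lt hT ha h1 hne1
  obtain ⟨hgj, hrj⟩ := top_of_lt hT ha h2 hne2
  set i := (diffSet β γ).max' (diffSet_nonempty hne1) with hidef
  set j := (diffSet γ ρ).max' (diffSet_nonempty hne2) with hjdef
  have hij : i ≠ j := fun h => by rw [h] at hgi; rw [hgi] at hgj; exact absurd hgj (by simp)
  have hd1 : deltaVal a β γ = a i := deltaVal_eq_max' ha _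
  have hd2 : deltaVal a γ ρ = a j := deltaVal_eq_max' ha _
  have hdne : deltaVal a β γ ≠ deltaVal a γ ρ := by
    rw [hd1, hd2]; exact fun h => hij (ha.injective h)
  refine ⟨hdne, ?_⟩
  rcases lt_or_gt_of_ne hij with hlt | hgt
  · have hjmem : j ∈ diffSet β ρ := by
      have hbj : β j = γ j := agree_of_max'_lt _ hlt
      simp only [diffSet, Finset.mem_filter, Finset.mem_univ, true_and]
      rw [hbj, hgj, hrj]; simp
    have hne3 : (diffSet β ρ).Nonempty := ⟨j, hjmem⟩
    have hmax : (diffSet β ρ).max' hne3 = j := by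
      refine le_antisymm (Finset.max'_le _ _ _ fun l hl => ?_) (Finset.le_max' _ _ hjmem)
      by_contra hc
      push_neg at hc
      have hbl : β l = γ l := agree_of_max'_lt _ (hlt.trans hc)
      have hgl : γ l = ρ l := agree_of_max'_lt _ hc
      simp only [diffSet, Finset.mem_filter, Finset.mem_univ, true_and] at hl
      exact hl (hbl.trans hgl)
    have : deltaVal a β ρ = a j := by
      rw [deltaVal_eq_max' ha hne3, hmax]
    rw [this, hd1, hd2, max_eq_right (le_of_lt (ha hlt))]
  · have himem : i ∈ diffSet β ρ := by
      have hri : γ i = ρ i := agree_of_max'_lt _ hgt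
      simp only [diffSet, Finset.mem_filter, Finset.mem_univ, true_and]
      rw [hbi, ← hri, hgi]; simp
    have hne3 : (diffSet β ρ).Nonempty := ⟨i, himem⟩
    have hmax : (diffSet β ρ).max' hne3 = i := by
      refine le_antisymm (Finset.max'_le _ _ _ fun l hl => ?_) (Finset.le_max' _ _ himem)
      by_contra hc
      push_neg at hc
      have hbl : β l = γ l := agree_of_max'_lt _ hc
      have hgl : γ l = ρ l := agree_of_max'_lt _ (hgt.trans hc)
      simp only [diffSet, Finset.mem_filter, Finset.mem_univ, true_and] at hl
      exact hl (hbl.trans hgl)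
    have : deltaVal a β ρ = a i := by
      rw [deltaVal_eq_max' ha hne3, hmax]
    rw [this, hd1, hd2, max_eq_left (le_of_lt (ha hgt))]

/-! ### Combinatorial lemmas on sequences -/

lemma runLemma {α : Type*} [LinearOrder α] (g : ℕ → α) (n : ℕ) (hn : 3 ≤ n)
    (hne : ∀ i, i + 1 ≤ 2 * n - 3 → g i ≠ g (i + 1))
    (hstep : ∀ i, i + 2 ≤ 2 * n - 3 → g (i + 1) < g i → g (i + 2) < g (i + 1)) :
    ∃ s, s + (n - 1) ≤ 2 * n - 3 ∧
      ((∀ i, s ≤ i → i + 1 ≤ s + (n - 1) → g i < g (i + 1)) ∨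
       (∀ i, s ≤ i → i + 1 ≤ s + (n - 1) → g (i + 1) < g i)) := by
  by_cases hex : ∃ i, i + 1 ≤ 2 * n - 3 ∧ g (i + 1) < g i
  · classical
    set p := Nat.find hex with hp
    obtain ⟨hp1, hp2⟩ := Nat.find_spec hex
    by_cases hpn : n - 1 ≤ p
    · refine ⟨0, by omega, Or.inl fun i hi hi2 => ?_⟩
      have hlt : i < p := by omega
      have := Nat.find_min hex hlt
      push_neg at this
      have h1 : i + 1 ≤ 2 * n - 3 := by omega
      exact lt_of_le_of_ne (this h1) (hne i h1)
    · push_neg at hpn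
      refine ⟨p, by omega, Or.inr fun i hi hi2 => ?_⟩
      have key : ∀ d, p + d + 1 ≤ p + (n - 1) → g (p + d + 1) < g (p + d) := by
        intro d
        induction d with
        | zero => intro _; simpa using hp2
        | succ d ih =>
          intro hd
          have h2 : p + d + 2 ≤ 2 * n - 3 := by omega
          have := hstep (p + d) h2 (ih (by omega))
          have he : p + (d + 1) + 1 = p + d + 2 := by omega
          have he2 : p + (d + 1) = p + d + 1 := by omega
          rw [he, he2]
          exact this
      have : i = p + (i - p) := by omega
      rw [this]
      exact key (i - p) (by omega)
  · push_neg at hex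
    refine ⟨0, by omega, Or.inl fun i hi hi2 => ?_⟩
    have h1 : i + 1 ≤ 2 * n - 3 := by omega
    exact lt_of_le_of_ne (hex i h1) (hne i h1)

lemma chainLemma {α : Type*} [Preorder α] (g : ℕ → α) (s e : ℕ)
    (hrun : ∀ i, s ≤ i → i + 1 ≤ e → g i < g (i + 1)) :
    ∀ i j, s ≤ i → i < j → j ≤ e → g i < g j := by
  intro i j hsi hij hje
  have key : ∀ d, i + d + 1 ≤ e → g i < g (i + d + 1) := by
    intro d
    induction d with
    | zero => intro h; exact hrun i hsi h
    | succ d ih =>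
      intro h
      have h1 : i + d + 1 ≤ e := by omega
      have := hrun (i + d + 1) (by omega) (by omega)
      have he : i + (d + 1) + 1 = i + d + 1 + 1 := by omega
      rw [he]
      exact (ih h1).trans this
  have : j = i + (j - i - 1) + 1 := by omega
  rw [this]
  exact key _ (by omega)

lemma chainLemmaDec {α : Type*} [Preorder α] (g : ℕ → α) (s e : ℕ)
    (hrun : ∀ i, s ≤ i → i + 1 ≤ e → g (i + 1) < g i) :
    ∀ i j, s ≤ i → i < j → j ≤ e → g j < g i := by
  intro i j hsi hij hje
  exact chainLemma (α := αᵒᵈ) (fun x => OrderDual.toDual (g x)) s e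
    (fun x h1 h2 => by simpa using hrun x h1 h2) i j hsi hij hje

lemma evalInc (m : ℕ) (D : ℕ → ℕ → ℕ)
    (hcomb : ∀ x y z, x < y → y < z → z < m → D x z = max (D x y) (D y z))
    (s e : ℕ) (he : e + 1 < m)
    (hrun : ∀ i, s ≤ i → i + 1 ≤ e → D i (i + 1) < D (i + 1) (i + 2)) :
    ∀ y x, s ≤ x → x < y → y ≤ e + 1 → D x y = D (y - 1) y := by
  intro y
  induction y with
  | zero => omega
  | succ y ih =>
    intro x hsx hxy hy
    rcases Nat.lt_or_ge x y with hlt | hge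
    · have h1 : D x (y + 1) = max (D x y) (D y (y + 1)) :=
        hcomb x y (y + 1) hlt (by omega) (by omega)
      have h2 : D x y = D (y - 1) y := ih x hsx hlt (by omega)
      have h3 : D (y - 1) y < D y (y + 1) := by
        have := hrun (y - 1) (by omega) (by omega)
        have hy1 : y - 1 + 1 = y := by omega
        have hy2 : y - 1 + 2 = y + 1 := by omega
        simp only [hy1, hy2] at this
        exact this
      rw [h1, h2]
      simp [Nat.max_eq_right (le_of_lt h3)]
    · have : x = y := by omega
      subst this
      simp

lemma evalDec (m : ℕ) (D : ℕ → ℕ → ℕ)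
    (hcomb : ∀ x y z, x < y → y < z → z < m → D x z = max (D x y) (D y z))
    (s e : ℕ) (he : e + 1 < m)
    (hrun : ∀ i, s ≤ i → i + 1 ≤ e → D (i + 1) (i + 2) < D i (i + 1)) :
    ∀ y x, s ≤ x → x < y → y ≤ e + 1 → D x y = D x (x + 1) := by
  intro y
  induction y with
  | zero => omega
  | succ y ih =>
    intro x hsx hxy hy
    rcases Nat.lt_or_ge x y with hlt | hge
    · have h1 : D x (y + 1) = max (D x y) (D y (y + 1)) :=
        hcomb x y (y + 1) hlt (by omega) (by omega)
      have h2 : D x y = D x (x + 1) := ih x hsx hlt (by omega)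
      have h3 : D y (y + 1) < D x (x + 1) := by
        have := chainLemmaDec (fun i => D i (i + 1)) s e hrun x y hsx hlt (by omega)
        simpa using this
      rw [h1, h2]
      simp [Nat.max_eq_left (le_of_lt h3)]
    · have : x = y := by omega
      subst this
      simp

/-! ### Main theorem -/

theorem stepUp_no_indiscernible (k n : ℕ) (hn : 3 ≤ n) (E : (Fin (k + 3) → ℝ) → Prop)
    (T : ℕ) (hT : 2 ≤ T) (N : ℕ) (a : Fin N → ℕ) (ha : StrictMono a)
    (hno : ¬ ∃ t : Fin n → Fin N, StrictMono t ∧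
        IsIndiscernible E fun j => (a (t j) : ℝ))
    (b : Fin (2 ^ N) → ℕ) (hb : StrictMono b)
    (hmem : ∀ x : Fin (2 ^ N), ∃ β : Fin N → Bool, b x = digitSum T a β)
    (honto : ∀ β : Fin N → Bool, ∃ x : Fin (2 ^ N), digitSum T a β = b x) :
    ¬ ∃ t : Fin (2 * n + (k + 3) - 4) → Fin (2 ^ N), StrictMono t ∧
        IsIndiscernible (StepUp E T a) (b ∘ t) := by
  rintro ⟨t, ht, hind⟩
  choose βf hβf using fun i : Fin (2 * n + (k + 3) - 4) => hmem (t i)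
  have hc : StrictMono fun i : Fin (2 * n + (k + 3) - 4) => b (t i) := fun i j h => hb (ht h)
  have hN : 0 < N := by
    by_contra h0
    have hN0 : N = 0 := by omega
    subst hN0
    have h01 : (⟨0, by omega⟩ : Fin (2 * n + (k + 3) - 4)) < ⟨1, by omega⟩ := Fin.mk_lt_mk.2 (by omega)
    have hlt : b (t ⟨0, by omega⟩) < b (t ⟨1, by omega⟩) := hc h01
    rw [hβf, hβf] at hlt
    simp [digitSum] at hlt
  set F : ℕ → Fin N → Bool := fun x => if h : x < (2 * n + (k + 3) - 4) then βf ⟨x, h⟩ else βf ⟨0, by omega⟩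
    with hF
  have hFlt : ∀ x (h : x < (2 * n + (k + 3) - 4)), F x = βf ⟨x, h⟩ := fun x h => dif_pos h
  have hmono : ∀ x y, x < y → y < (2 * n + (k + 3) - 4) → digitSum T a (F x) < digitSum T a (F y) := by
    intro x y hxy hy
    rw [hFlt x (by omega), hFlt y hy, ← hβf, ← hβf]
    exact hc (Fin.mk_lt_mk.2 hxy)
  set δ' : ℕ → ℕ := fun x => deltaVal a (F x) (F (x + 1)) with hδ'
  have hFne : ∀ x, x + 1 < (2 * n + (k + 3) - 4) → F x ≠ F (x + 1) := by
    intro x h heq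
    have := hmono x (x + 1) (by omega) h
    rw [heq] at this
    omega
  set Δ' : ℕ → Fin N := fun x =>
    if h : (diffSet (F x) (F (x + 1))).Nonempty then (diffSet (F x) (F (x + 1))).max' h
    else ⟨0, hN⟩ with hΔ'
  have hδΔ : ∀ x, x + 1 < (2 * n + (k + 3) - 4) → δ' x = a (Δ' x) := by
    intro x h
    have hne := diffSet_nonempty (hFne x h)
    have hΔx : Δ' x = (diffSet (F x) (F (x + 1))).max' hne := dif_pos hne
    show deltaVal a (F x) (F (x + 1)) = a (Δ' x)
    rw [hΔx]
    exact deltaVal_eq_max' ha hne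
  have hcomb : ∀ x y z, x < y → y < z → z < (2 * n + (k + 3) - 4) →
      deltaVal a (F x) (F y) ≠ deltaVal a (F y) (F z) ∧
      deltaVal a (F x) (F z) = max (deltaVal a (F x) (F y)) (deltaVal a (F y) (F z)) :=
    fun x y z h1 h2 h3 => delta_combine hT ha (hmono x y h1 (by omega)) (hmono y z h2 h3)
  have hcomb2 : ∀ x y z, x < y → y < z → z < (2 * n + (k + 3) - 4) →
      deltaVal a (F x) (F z) = max (deltaVal a (F x) (F y)) (deltaVal a (F y) (F z)) :=
    fun x y z h1 h2 h3 => (hcomb x y z h1 h2 h3).2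
  have hneδ : ∀ i, i + 1 ≤ 2 * n - 3 → δ' i ≠ δ' (i + 1) := by
    intro i h
    exact (hcomb i (i + 1) (i + 2) (by omega) (by omega) (by omega)).1
  set ddn : (Fin (k + 4) → ℕ) → Fin (k + 3) → ℕ :=
    fun qn i => deltaVal a (F (qn i.castSucc)) (F (qn i.succ)) with hddn
  set dd : (Fin (k + 4) → ℕ) → Fin (k + 3) → ℝ := fun qn i => ((ddn qn i : ℕ) : ℝ) with hdd
  have key : ∀ qn : Fin (k + 4) → ℕ, StrictMono qn → qn (Fin.last (k + 3)) < (2 * n + (k + 3) - 4) →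
      ∃ q : Fin (k + 4) → Fin (2 * n + (k + 3) - 4), StrictMono q ∧
        (StepUp E T a ((fun i : Fin (2 * n + (k + 3) - 4) => b (t i)) ∘ q) ↔
          ((E (dd qn) ∧ StrictMono (dd qn)) ∨
           (E (fun i => dd qn (Fin.rev i)) ∧ StrictAnti (dd qn)) ∨
           (dd qn 0 < dd qn 1 ∧ dd qn 2 < dd qn 1))) := by
    intro qn hqn hqlast
    have hql : ∀ l, qn l < (2 * n + (k + 3) - 4) := fun l => lt_of_le_of_lt (hqn.monotone (Fin.le_last l)) hqlast
    refine ⟨fun l => ⟨qn l, hql l⟩, fun l l' h => Fin.mk_lt_mk.2 (hqn h), ?_⟩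
    have hβeq : ∀ i : Fin (k + 4), b (t ⟨qn i, hql i⟩) = digitSum T a (F (qn i)) := by
      intro i
      rw [hFlt (qn i) (hql i)]
      exact hβf _
    constructor
    · rintro ⟨hmq, βw, hβw, hdisj⟩
      have hβweq : βw = fun i => F (qn i) := by
        funext i
        refine digitSum_injective hT ha ?_
        rw [← hβw i]
        exact hβeq i
      rw [hβweq] at hdisj
      exact hdisj
    · intro hdisj
      exact ⟨fun l l' h => hc (Fin.mk_lt_mk.2 (hqn h)), fun i => F (qn i),
        fun i => hβeq i, hdisj⟩
  have hcqval : ∀ (x : ℕ) (l : Fin (k + 3)),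
      ddn (fun l : Fin (k + 4) => x + (l : ℕ)) l = δ' (x + (l : ℕ)) := fun x l => rfl
  have hdv : ∀ (x : ℕ) (l : Fin (k + 3)),
      dd (fun l : Fin (k + 4) => x + (l : ℕ)) l = ((δ' (x + (l : ℕ)) : ℕ) : ℝ) := by
    intro x l
    show ((ddn (fun l : Fin (k + 4) => x + (l : ℕ)) l : ℕ) : ℝ) = _
    rw [hcqval x l]
  have h01 : (0 : Fin (k + 3)) < 1 := by
    rw [Fin.lt_def]
    simp [Fin.val_one]
  have h12 : (1 : Fin (k + 3)) < 2 := by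
    rw [Fin.lt_def]
    simp [Fin.val_one, Fin.val_two, Nat.mod_eq_of_lt (show 2 < k + 3 by omega)]
  have hv0 : ((0 : Fin (k + 3)) : ℕ) = 0 := rfl
  have hv1 : ((1 : Fin (k + 3)) : ℕ) = 1 := Fin.val_one _
  have hv2 : ((2 : Fin (k + 3)) : ℕ) = 2 := Fin.val_two
  -- main machinery for increasing runs
  have mainInc : ∀ s : ℕ, s + (n - 1) ≤ 2 * n - 3 →
      (∀ i, s ≤ i → i + 1 ≤ s + (n - 1) → δ' i < δ' (i + 1)) →
      ∃ t' : Fin n → Fin N, StrictMono t' ∧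
        ∀ s' : Fin (k + 3) → Fin n, StrictMono s' →
          ∃ qn : Fin (k + 4) → ℕ, StrictMono qn ∧ qn (Fin.last (k + 3)) < (2 * n + (k + 3) - 4) ∧
            StrictMono (dd qn) ∧ dd qn = fun l => ((a (t' (s' l)) : ℕ) : ℝ) := by
    intro s hs hrun
    have hchain : ∀ i j, s ≤ i → i < j → j ≤ s + (n - 1) → δ' i < δ' j :=
      chainLemma δ' s (s + (n - 1)) hrun
    have harg : ∀ j : Fin n, s + (j : ℕ) + 1 < (2 * n + (k + 3) - 4) := by
      intro j
      have := j.isLt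
      omega
    refine ⟨fun j => Δ' (s + (j : ℕ)), ?_, ?_⟩
    · intro j j' hjj
      have hjj' : (j : ℕ) < (j' : ℕ) := hjj
      have hj'n : (j' : ℕ) < n := j'.isLt
      have hlt : δ' (s + (j : ℕ)) < δ' (s + (j' : ℕ)) :=
        hchain _ _ (by omega) (by omega) (by omega)
      rw [hδΔ (s + (j : ℕ)) (harg j), hδΔ (s + (j' : ℕ)) (harg j')] at hlt
      exact ha.lt_iff_lt.1 hlt
    · intro s' hs'
      have hvs : ∀ l : Fin (k + 3), ((s' l : ℕ)) ≤ n - 1 := by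
        intro l
        have := (s' l).isLt
        omega
      set qn : Fin (k + 4) → ℕ :=
        Fin.cons (s + ((s' 0) : ℕ)) (fun l => s + ((s' l) : ℕ) + 1) with hqndef
      have hq0 : qn 0 = s + ((s' 0) : ℕ) := rfl
      have hqsucc : ∀ l : Fin (k + 3), qn l.succ = s + ((s' l) : ℕ) + 1 :=
        fun l => Fin.cons_succ _ _ l
      have hqmono : StrictMono qn := by
        rw [Fin.strictMono_iff_lt_succ]
        intro i
        induction i using Fin.cases with
        | zero =>
          rw [show ((0 : Fin (k + 3)).castSucc) = (0 : Fin (k + 4)) from rfl, hq0, hqsucc 0]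
          omega
        | succ j =>
          rw [show (j.succ).castSucc = (j.castSucc).succ from (Fin.succ_castSucc j).symm,
            hqsucc, hqsucc]
          have : ((s' j.castSucc) : ℕ) < ((s' j.succ) : ℕ) := hs' (Fin.castSucc_lt_succ : j.castSucc < j.succ)
          omega
      have hqlast : qn (Fin.last (k + 3)) < (2 * n + (k + 3) - 4) := by
        rw [show (Fin.last (k + 3)) = (Fin.last (k + 2)).succ from rfl, hqsucc]
        have := hvs (Fin.last (k + 2))
        omega
      have hval : ∀ l : Fin (k + 3), ddn qn l = δ' (s + ((s' l) : ℕ)) := by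
        intro l
        induction l using Fin.cases with
        | zero =>
          show deltaVal a (F (qn ((0 : Fin (k + 3)).castSucc)))
            (F (qn ((0 : Fin (k + 3)).succ))) = _
          rw [show ((0 : Fin (k + 3)).castSucc) = (0 : Fin (k + 4)) from rfl, hq0, hqsucc 0]
        | succ j =>
          show deltaVal a (F (qn ((j.succ).castSucc))) (F (qn ((j.succ).succ))) = _
          rw [show (j.succ).castSucc = (j.castSucc).succ from (Fin.succ_castSucc j).symm,
            hqsucc, hqsucc]
          have hjlt : ((s' j.castSucc) : ℕ) < ((s' j.succ) : ℕ) := hs' (Fin.castSucc_lt_succ : j.castSucc < j.succ)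
          have e3 : deltaVal a (F (s + ((s' j.castSucc) : ℕ) + 1))
              (F (s + ((s' j.succ) : ℕ) + 1))
              = deltaVal a (F (s + ((s' j.succ) : ℕ) + 1 - 1)) (F (s + ((s' j.succ) : ℕ) + 1)) :=
            evalInc (2 * n + (k + 3) - 4) (fun x y => deltaVal a (F x) (F y)) hcomb2 s (s + (n - 1))
              (by omega) (fun i hh1 hh2 => hrun i hh1 hh2)
              (s + ((s' j.succ) : ℕ) + 1) (s + ((s' j.castSucc) : ℕ) + 1)
              (by omega) (by omega) (by have := hvs j.succ; omega)
          rw [e3, show s + ((s' j.succ) : ℕ) + 1 - 1 = s + ((s' j.succ) : ℕ) by omega]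
      have hmonon : ∀ l l' : Fin (k + 3), l < l' → ddn qn l < ddn qn l' := by
        intro l l' hll
        rw [hval l, hval l']
        have hsv : ((s' l) : ℕ) < ((s' l') : ℕ) := hs' hll
        exact hchain _ _ (by omega) (by omega) (by have := hvs l'; omega)
      have hmonod : StrictMono (dd qn) := by
        intro l l' hll
        have := hmonon l l' hll
        show ((ddn qn l : ℕ) : ℝ) < ((ddn qn l' : ℕ) : ℝ)
        exact_mod_cast this
      refine ⟨qn, hqmono, hqlast, hmonod, ?_⟩
      funext l
      show ((ddn qn l : ℕ) : ℝ) = _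
      rw [hval l, hδΔ _ (harg (s' l))]
  -- main machinery for decreasing runs
  have mainDec : ∀ s : ℕ, s + (n - 1) ≤ 2 * n - 3 →
      (∀ i, s ≤ i → i + 1 ≤ s + (n - 1) → δ' (i + 1) < δ' i) →
      ∃ t' : Fin n → Fin N, StrictMono t' ∧
        ∀ s' : Fin (k + 3) → Fin n, StrictMono s' →
          ∃ qn : Fin (k + 4) → ℕ, StrictMono qn ∧ qn (Fin.last (k + 3)) < (2 * n + (k + 3) - 4) ∧
            StrictAnti (dd qn) ∧
            (fun i => dd qn (Fin.rev i)) = fun l => ((a (t' (s' l)) : ℕ) : ℝ) := by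
    intro s hs hrun
    have hchain : ∀ i j, s ≤ i → i < j → j ≤ s + (n - 1) → δ' j < δ' i :=
      chainLemmaDec δ' s (s + (n - 1)) hrun
    have harg : ∀ j : Fin n, s + (n - 1) - (j : ℕ) + 1 < (2 * n + (k + 3) - 4) := by
      intro j
      omega
    refine ⟨fun j => Δ' (s + (n - 1) - (j : ℕ)), ?_, ?_⟩
    · intro j j' hjj
      have hjj' : (j : ℕ) < (j' : ℕ) := hjj
      have hj'n : (j' : ℕ) < n := j'.isLt
      have hlt : δ' (s + (n - 1) - (j : ℕ)) < δ' (s + (n - 1) - (j' : ℕ)) :=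
        hchain (s + (n - 1) - (j' : ℕ)) (s + (n - 1) - (j : ℕ)) (by omega) (by omega) (by omega)
      rw [hδΔ _ (harg j), hδΔ _ (harg j')] at hlt
      exact ha.lt_iff_lt.1 hlt
    · intro s' hs'
      have hvs : ∀ l : Fin n, ((l : ℕ)) ≤ n - 1 := by
        intro l
        have := l.isLt
        omega
      set pos : Fin (k + 3) → ℕ := fun l => s + (n - 1) - ((s' l.rev) : ℕ) with hpos
      have hposmono : ∀ l l' : Fin (k + 3), l < l' → pos l < pos l' := by
        intro l l' hll
        have h1 : l'.rev < l.rev := Fin.rev_lt_rev.2 hll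
        have h2 : ((s' l'.rev) : ℕ) < ((s' l.rev) : ℕ) := hs' h1
        have h3 := hvs (s' l.rev)
        simp only [hpos]
        omega
      set qn : Fin (k + 4) → ℕ := Fin.snoc pos (pos (Fin.last (k + 2)) + 1) with hqndef
      have hqcast : ∀ l : Fin (k + 3), qn l.castSucc = pos l := fun l => Fin.snoc_castSucc _ _ l
      have hqlastval : qn (Fin.last (k + 3)) = pos (Fin.last (k + 2)) + 1 := Fin.snoc_last _ _
      have hqmono : StrictMono qn := by
        rw [Fin.strictMono_iff_lt_succ]
        intro i
        induction i using Fin.lastCases with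
        | last =>
          rw [show (Fin.last (k + 2)).succ = Fin.last (k + 3) from rfl, hqlastval, hqcast]
          omega
        | cast j =>
          rw [show (j.castSucc).succ = (j.succ).castSucc from Fin.succ_castSucc j,
            hqcast, hqcast]
          exact hposmono _ _ (Fin.castSucc_lt_succ : j.castSucc < j.succ)
      have hposle : ∀ l, pos l ≤ s + (n - 1) := by
        intro l
        simp only [hpos]
        omega
      have hposge : ∀ l, s ≤ pos l := by
        intro l
        have := hvs (s' l.rev)
        simp only [hpos]
        omega
      have hqlast : qn (Fin.last (k + 3)) < (2 * n + (k + 3) - 4) := by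
        rw [hqlastval]
        have := hposle (Fin.last (k + 2))
        omega
      have hval : ∀ l : Fin (k + 3), ddn qn l = δ' (pos l) := by
        intro l
        induction l using Fin.lastCases with
        | last =>
          show deltaVal a (F (qn (Fin.last (k + 2)).castSucc))
            (F (qn (Fin.last (k + 2)).succ)) = _
          rw [show (Fin.last (k + 2)).succ = Fin.last (k + 3) from rfl, hqlastval, hqcast]
        | cast j =>
          show deltaVal a (F (qn (j.castSucc).castSucc)) (F (qn (j.castSucc).succ)) = _
          rw [show (j.castSucc).succ = (j.succ).castSucc from Fin.succ_castSucc j,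
            hqcast, hqcast]
          have hxy : pos j.castSucc < pos j.succ := hposmono _ _ (Fin.castSucc_lt_succ : j.castSucc < j.succ)
          have e3 : deltaVal a (F (pos j.castSucc)) (F (pos j.succ))
              = deltaVal a (F (pos j.castSucc)) (F (pos j.castSucc + 1)) :=
            evalDec (2 * n + (k + 3) - 4) (fun x y => deltaVal a (F x) (F y)) hcomb2 s (s + (n - 1))
              (by omega) (fun i hh1 hh2 => hrun i hh1 hh2)
              (pos j.succ) (pos j.castSucc) (hposge _) hxy
              (by have := hposle j.succ; omega)
          rw [e3]
      have hantin : ∀ l l' : Fin (k + 3), l < l' → ddn qn l' < ddn qn l := by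
        intro l l' hll
        rw [hval l, hval l']
        exact hchain (pos l) (pos l') (hposge l) (hposmono _ _ hll) (hposle l')
      have hantid : StrictAnti (dd qn) := by
        intro l l' hll
        have := hantin l l' hll
        show ((ddn qn l' : ℕ) : ℝ) < ((ddn qn l : ℕ) : ℝ)
        exact_mod_cast this
      refine ⟨qn, hqmono, hqlast, hantid, ?_⟩
      funext i
      show ((ddn qn i.rev : ℕ) : ℝ) = _
      rw [hval i.rev]
      have e4 : pos i.rev = s + (n - 1) - ((s' i) : ℕ) := by
        simp only [hpos, Fin.rev_rev]
      rw [e4, hδΔ _ (harg (s' i))]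
  unfold IsIndiscernible at hind
  rcases hind with hpos | hneg
  · -- the step-up relation holds on all increasing tuples
    have hkeyD : ∀ qn : Fin (k + 4) → ℕ, StrictMono qn → qn (Fin.last (k + 3)) < (2 * n + (k + 3) - 4) →
        ((E (dd qn) ∧ StrictMono (dd qn)) ∨
         (E (fun i => dd qn (Fin.rev i)) ∧ StrictAnti (dd qn)) ∨
         (dd qn 0 < dd qn 1 ∧ dd qn 2 < dd qn 1)) := by
      intro qn hh1 hh2
      obtain ⟨q, hq, hiff⟩ := key qn hh1 hh2
      exact hiff.1 (hpos q hq)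
    have hnolocmin : ∀ i, i + 2 ≤ 2 * n - 3 → δ' (i + 1) < δ' i → δ' (i + 2) < δ' (i + 1) := by
      intro i hile hdec
      have hne2 : δ' (i + 1) ≠ δ' (i + 2) := by
        have h := hneδ (i + 1) (by omega)
        rwa [show i + 1 + 1 = i + 2 from rfl] at h
      rcases Nat.lt_or_ge (δ' (i + 1)) (δ' (i + 2)) with hlt | hge
      · exfalso
        have hd := hkeyD (fun l : Fin (k + 4) => i + (l : ℕ))
          (fun l l' h => Nat.add_lt_add_left h i)
          (by show i + ((Fin.last (k + 3)) : ℕ) < (2 * n + (k + 3) - 4); rw [Fin.val_last]; omega)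
        rcases hd with ⟨hE, hmono'⟩ | ⟨hE, hanti'⟩ | ⟨ha01, ha21⟩
        · have := hmono' h01
          rw [hdv i 0, hdv i 1, hv0, hv1] at this
          simp only [Nat.add_zero] at this
          have : δ' i < δ' (i + 1) := by exact_mod_cast this
          omega
        · have := hanti' h12
          rw [hdv i 1, hdv i 2, hv1, hv2] at this
          have : δ' (i + 2) < δ' (i + 1) := by exact_mod_cast this
          omega
        · rw [hdv i 0, hdv i 1, hv0, hv1] at ha01
          simp only [Nat.add_zero] at ha01
          have : δ' i < δ' (i + 1) := by exact_mod_cast ha01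
          omega
      · omega
    obtain ⟨s, hs, hrt⟩ := runLemma δ' n hn hneδ hnolocmin
    rcases hrt with hinc | hdec
    · obtain ⟨t', ht', hall⟩ := mainInc s hs hinc
      refine hno ⟨t', ht', Or.inl ?_⟩
      intro s' hs'
      obtain ⟨qn, hh1, hh2, hmonod, heq⟩ := hall s' hs'
      rcases hkeyD qn hh1 hh2 with ⟨hE, _⟩ | ⟨hE, hanti'⟩ | ⟨ha01, ha21⟩
      · rw [heq] at hE
        exact hE
      · exact absurd (hmonod h01) (not_lt.2 (le_of_lt (hanti' h01)))
      · exact absurd (hmonod h12) (not_lt.2 (le_of_lt ha21))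
    · obtain ⟨t', ht', hall⟩ := mainDec s hs hdec
      refine hno ⟨t', ht', Or.inl ?_⟩
      intro s' hs'
      obtain ⟨qn, hh1, hh2, hantid, heq⟩ := hall s' hs'
      rcases hkeyD qn hh1 hh2 with ⟨hE, hmono'⟩ | ⟨hE, _⟩ | ⟨ha01, ha21⟩
      · exact absurd (hmono' h01) (not_lt.2 (le_of_lt (hantid h01)))
      · rw [heq] at hE
        exact hE
      · exact absurd ha01 (not_lt.2 (le_of_lt (hantid h01)))
  · -- the step-up relation fails on all increasing tuples
    have hkeyN : ∀ qn : Fin (k + 4) → ℕ, StrictMono qn → qn (Fin.last (k + 3)) < (2 * n + (k + 3) - 4) →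
        ¬((E (dd qn) ∧ StrictMono (dd qn)) ∨
          (E (fun i => dd qn (Fin.rev i)) ∧ StrictAnti (dd qn)) ∨
          (dd qn 0 < dd qn 1 ∧ dd qn 2 < dd qn 1)) := by
      intro qn hh1 hh2 hd
      obtain ⟨q, hq, hiff⟩ := key qn hh1 hh2
      exact hneg q hq (hiff.2 hd)
    have hnolocmax : ∀ i, i + 2 ≤ 2 * n - 3 → δ' i < δ' (i + 1) → δ' (i + 1) < δ' (i + 2) := by
      intro i hile hinc
      have hne2 : δ' (i + 1) ≠ δ' (i + 2) := by
        have h := hneδ (i + 1) (by omega)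
        rwa [show i + 1 + 1 = i + 2 from rfl] at h
      rcases Nat.lt_or_ge (δ' (i + 1)) (δ' (i + 2)) with hlt | hge
      · exact hlt
      · exfalso
        refine hkeyN (fun l : Fin (k + 4) => i + (l : ℕ))
          (fun l l' h => Nat.add_lt_add_left h i)
          (by show i + ((Fin.last (k + 3)) : ℕ) < (2 * n + (k + 3) - 4); rw [Fin.val_last]; omega)
          (Or.inr (Or.inr ⟨?_, ?_⟩))
        · rw [hdv i 0, hdv i 1, hv0, hv1]
          simp only [Nat.add_zero]
          exact_mod_cast hinc
        · rw [hdv i 1, hdv i 2, hv1, hv2]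
          have : δ' (i + 2) < δ' (i + 1) := by omega
          exact_mod_cast this
    obtain ⟨s, hs, hrt⟩ := runLemma (fun i => OrderDual.toDual (δ' i)) n hn
      (fun i h => by simpa using hneδ i h)
      (fun i h hstep => by
        simpa using hnolocmax i h (by simpa using hstep))
    rcases hrt with hdec | hinc
    · obtain ⟨t', ht', hall⟩ := mainDec s hs (fun i hh1 hh2 => by simpa using hdec i hh1 hh2)
      refine hno ⟨t', ht', Or.inr ?_⟩
      intro s' hs'
      obtain ⟨qn, hh1, hh2, hantid, heq⟩ := hall s' hs'
      intro hE
      refine hkeyN qn hh1 hh2 (Or.inr (Or.inl ⟨?_, hantid⟩))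
      rw [heq]
      exact hE
    · obtain ⟨t', ht', hall⟩ := mainInc s hs (fun i hh1 hh2 => by simpa using hinc i hh1 hh2)
      refine hno ⟨t', ht', Or.inr ?_⟩
      intro s' hs'
      obtain ⟨qn, hh1, hh2, hmonod, heq⟩ := hall s' hs'
      intro hE
      refine hkeyN qn hh1 hh2 (Or.inl ⟨?_, hmonod⟩)
      rw [heq]
      exact hE
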